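/- Let n be a positive integer, let A be a transitive subgroup of the symmetric group Sₙ acting on n points, and let e be a positive integer with n/2 < e < n and gcd(e, n) = 1. If A contains an e-cycle (a cyclic permutation whose support has cardinality e), then the action of A on the n points is primitive. -/
import Mathlib

open Pointwise


/-- An action of a group `G` on `X` is primitive if it is transitive and every block of
the action is a singleton (a subsingleton) or the whole set. -/
def MulAction.IsPreprimitive' (G X : Type) [Group G] [MulAction G X] : Prop :=
  MulAction.IsPretransitive G X ∧
    ∀ B : Set X, MulAction.IsBlock G B → B.Subsingleton ∨ B = Set.univ

/-- A transitive subgroup `A ≤ Sₙ` containing an `e`-cycle, where `n/2 < e < n` and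
`gcd(e,n) = 1`, is primitive. -/
theorem isPreprimitive_of_contains_cycle
    (n : ℕ) (hn : 0 < n) (A : Subgroup (Equiv.Perm (Fin n)))
    (hA : MulAction.IsPretransitive A (Fin n))
    (e : ℕ) (he₁ : n < 2 * e) (he₂ : e < n) (hcop : Nat.Coprime e n)
    (σ : Equiv.Perm (Fin n)) (hσA : σ ∈ A)
    (hcyc : σ.IsCycle) (hsupp : σ.support.card = e) :
    MulAction.IsPreprimitive' A (Fin n) := by
  unfold MulAction.IsPreprimitive'
  haveI := hA
  refine ⟨hA, ?_⟩
  have hnA : Nat.card (Fin n) = n := by simp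
  have key : ∀ (B : Set (Fin n)), MulAction.IsBlock A B → B.Nontrivial →
      (∃ x ∈ B, x ∈ σ.support) → B = Set.univ := by
    intro B hB hBnt ⟨x, hxB, hxs⟩
    by_cases hc : σ • B = B
    · -- support ⊆ B
      have hsub : (σ.support : Set (Fin n)) ⊆ B := by
        intro y hy
        simp only [Finset.coe_sort_coe, Finset.mem_coe, Equiv.Perm.mem_support] at hy
        obtain ⟨i, hi⟩ := hcyc.sameCycle (Equiv.Perm.mem_support.mp hxs) hy
        have hst : σ ∈ MulAction.stabilizer (Equiv.Perm (Fin n)) B := hc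
        have : (σ ^ i) • B = B := Subgroup.zpow_mem _ hst i
        rw [← hi, ← this]
        exact Set.smul_mem_smul_set hxB
      apply hB.eq_univ_of_card_lt
      have : e ≤ B.ncard := by
        rw [← hsupp, ← Set.ncard_coe_finset]
        exact Set.ncard_le_ncard hsub B.toFinite
      rw [hnA]; omega
    · exfalso
      set τ : A := ⟨σ, hσA⟩ with hτ
      have hsmul_eq : ∀ (g : Equiv.Perm (Fin n)) (hg : g ∈ A), (⟨g, hg⟩ : A) • B = g • B := by
        intro g hg; rfl
      -- B ⊆ support
      have hBsub : B ⊆ (σ.support : Set (Fin n)) := by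
        intro y hyB
        by_contra hys
        have hy : σ y = y := by
          simpa [Equiv.Perm.mem_support] using hys
        have hne : (τ • B ∩ B).Nonempty := ⟨y, ⟨by
          rw [hsmul_eq σ hσA]
          exact ⟨y, hyB, hy⟩, hyB⟩⟩
        exact hc (by rw [← hsmul_eq σ hσA]; exact hB.smul_eq_of_nonempty hne)
      -- block for zpowers σ
      have hle : Subgroup.zpowers σ ≤ A := Subgroup.zpowers_le.mpr hσA
      have hBz : MulAction.IsBlock (Subgroup.zpowers σ) B := by
        intro g1 g2 hne
        exact hB (g₁ := ⟨g1, hle g1.2⟩) (g₂ := ⟨g2, hle g2.2⟩) hne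
      -- SubMulAction on the support
      let S : SubMulAction (Subgroup.zpowers σ) (Fin n) :=
        { carrier := (σ.support : Set (Fin n))
          smul_mem' := by
            rintro ⟨c, i, rfl⟩ y hy
            exact (Equiv.Perm.zpow_apply_mem_support (n := i)).mpr hy }
      haveI : MulAction.IsPretransitive (Subgroup.zpowers σ) S := by
        constructor
        rintro ⟨y, hy⟩ ⟨z, hz⟩
        have hy' : σ y ≠ y := Equiv.Perm.mem_support.mp hy
        have hz' : σ z ≠ z := Equiv.Perm.mem_support.mp hz
        obtain ⟨i, hi⟩ := hcyc.sameCycle hy' hz'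
        refine ⟨⟨σ ^ i, Subgroup.zpow_mem _ (Subgroup.mem_zpowers σ) i⟩, ?_⟩
        exact Subtype.ext hi
      have hBp : MulAction.IsBlock (Subgroup.zpowers σ) (Subtype.val ⁻¹' B : Set S) :=
        hBz.subtype_val_preimage
      have hpre_ncard : (Subtype.val ⁻¹' B : Set S).ncard = B.ncard := by
        apply Set.ncard_preimage_of_injective_subset_range Subtype.val_injective
        rintro y hyB
        exact ⟨⟨y, hBsub hyB⟩, rfl⟩
      obtain ⟨a, haB⟩ := hBnt.nonempty
      have hpre_ne : (Subtype.val ⁻¹' B : Set S).Nonempty := ⟨⟨a, hBsub haB⟩, haB⟩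
      have hcardS : Nat.card S = e := by
        have h1 : Nat.card S = (σ.support : Set (Fin n)).ncard :=
          Nat.card_coe_set_eq _
        rw [h1, Set.ncard_coe_finset, hsupp]
      have hdvd_e : B.ncard ∣ e := by
        rw [← hpre_ncard, ← hcardS]
        exact hBp.ncard_dvd_card hpre_ne
      have hdvd_n : B.ncard ∣ n := by
        have := hB.ncard_dvd_card hBnt.nonempty
        rwa [hnA] at this
      have : B.ncard = 1 := Nat.eq_one_of_dvd_one (hcop ▸ Nat.dvd_gcd hdvd_e hdvd_n)
      obtain ⟨u, hu, v, hv, huv⟩ := hBnt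
      have h2 : 1 < B.ncard := (Set.one_lt_ncard B.toFinite).mpr ⟨u, hu, v, hv, huv⟩
      omega
  intro B hB
  by_cases hs : B.Subsingleton
  · exact Or.inl hs
  · right
    rw [Set.not_subsingleton_iff] at hs
    obtain ⟨a, haB⟩ := hs.nonempty
    have hse : σ.support.Nonempty := by
      rw [← Finset.card_pos, hsupp]; omega
    obtain ⟨x, hx⟩ := hse
    obtain ⟨g, hg⟩ := hA.exists_smul_eq a x
    have hBu : g • B = Set.univ := by
      apply key (g • B) (hB.translate g)
      · obtain ⟨u, hu, v, hv, huv⟩ := hs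
        exact ⟨g • u, ⟨u, hu, rfl⟩, g • v, ⟨v, hv, rfl⟩,
          fun h => huv (smul_left_cancel g h)⟩
      · exact ⟨x, ⟨a, haB, hg⟩, hx⟩
    have := congrArg (fun s => g⁻¹ • s) hBu
    simpa [Set.smul_set_univ, inv_smul_smul] using this
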